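/- Let G be a group acting by isometries on a real tree T such that: (i) every subgroup of G that stabilizes an arc of T pointwise has a nilpotent subgroup of index at most k (for a uniform integer k); (ii) every group that fixes a tripod of T pointwise is finitely generated. Then the pointwise stabilizer of every unstable arc of T contains a subgroup of index at most k! that fixes a tripod of T pointwise; in particular it is finitely generated. -/

import Mathlib

open Pointwise

/-- `MBtw x y z`: `y` lies on the geodesic segment from `x` to `z` (metric betweenness). -/
def MBtw {T : Type*} [MetricSpace T] (x y z : T) : Prop :=
  dist x y + dist y z = dist x z

/-- The (metric) segment from `x` to `z`. -/
def seg {T : Type*} [MetricSpace T] (x z : T) : Set T := {y | MBtw x y z}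

/-- A subset is (metrically) convex if it contains the segment between any two of its points. -/
def MConvex {T : Type*} [MetricSpace T] (S : Set T) : Prop :=
  ∀ x ∈ S, ∀ z ∈ S, seg x z ⊆ S

/-- A real tree: a geodesic metric space which is 0-hyperbolic (four-point condition). -/
class RealTree (T : Type*) [MetricSpace T] : Prop where
  exists_btw : ∀ x z : T, ∀ r ∈ Set.Icc (0 : ℝ) (dist x z), ∃ y, MBtw x y z ∧ dist x y = r
  fourPoint : ∀ x y z w : T,
    dist x y + dist z w ≤ max (dist x z + dist y w) (dist x w + dist y z)

/-- An arc: a nondegenerate segment. -/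
def IsArc {T : Type*} [MetricSpace T] (I : Set T) : Prop :=
  ∃ a b : T, a ≠ b ∧ I = seg a b

/-- A minimal action: no proper nonempty invariant subtree. -/
def MinimalAction (G T : Type*) [Group G] [MetricSpace T] [MulAction G T] : Prop :=
  ∀ Y : Set T, Y.Nonempty → MConvex Y → (∀ g : G, g • Y = Y) → Y = Set.univ

/-- `Y` is an indecomposable subtree for the `G`-action: it is nondegenerate, and every arc
`J ⊆ Y` is covered by finitely many `G`-translates of any arc `I ⊆ Y`, with consecutive
translates overlapping in a nondegenerate intersection. -/
def Indecomposable (G : Type*) {T : Type*} [Group G] [MetricSpace T] [MulAction G T]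
    (Y : Set T) : Prop :=
  (∃ I, IsArc I ∧ I ⊆ Y) ∧
  ∀ I J : Set T, IsArc I → I ⊆ Y → IsArc J → J ⊆ Y →
    ∃ n : ℕ, ∃ g : Fin (n + 1) → G,
      J ⊆ ⋃ i, g i • I ∧
      ∀ i : Fin n, ∃ A, IsArc A ∧ A ⊆ (g i.castSucc • I) ∩ (g i.succ • I)

/-- The pointwise stabilizer of a subset. -/
def ptStab (G : Type*) {T : Type*} [Group G] [MulAction G T] (X : Set T) : Subgroup G where
  carrier := {g : G | ∀ x ∈ X, g • x = x}
  one_mem' := fun x _ => one_smul G x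
  mul_mem' := by
    intro a b ha hb x hx
    rw [mul_smul, hb x hx, ha x hx]
  inv_mem' := by
    intro a ha x hx
    nth_rewrite 1 [← ha x hx]
    exact inv_smul_smul a x

/-- A tripod: the union of three nondegenerate segments meeting at a common endpoint O,
with pairwise intersection {O}. -/
def IsTripod {T : Type*} [MetricSpace T] (X : Set T) : Prop :=
  ∃ O a b c : T, O ≠ a ∧ O ≠ b ∧ O ≠ c ∧
    X = seg O a ∪ seg O b ∪ seg O c ∧
    seg O a ∩ seg O b = {O} ∧ seg O a ∩ seg O c = {O} ∧ seg O b ∩ seg O c = {O}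

set_option linter.unusedSectionVars false

section Geometry

variable {T : Type*} [MetricSpace T]

lemma mbtw_symm {x y z : T} (h : MBtw x y z) : MBtw z y x := by
  unfold MBtw at *; rw [dist_comm z y, dist_comm y x, dist_comm z x]; linarith

lemma mbtw_self_left (x z : T) : MBtw x x z := by simp [MBtw]

lemma mbtw_self_right (x z : T) : MBtw x z z := by simp [MBtw]

lemma mem_seg {x y z : T} : y ∈ seg x z ↔ MBtw x y z := Iff.rfl

lemma seg_comm (x z : T) : seg x z = seg z x := by
  ext y; exact ⟨mbtw_symm, mbtw_symm⟩

lemma mbtw_trans {u p v w : T} (h1 : MBtw u p v) (h2 : MBtw u v w) : MBtw u p w := by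
  unfold MBtw at *
  have t1 := dist_triangle u p w
  have t2 := dist_triangle p v w
  linarith

lemma mbtw_mid {a O x b : T} (h1 : MBtw a O x) (h2 : MBtw a x b) : MBtw O x b := by
  unfold MBtw at *
  have t1 := dist_triangle O x b
  have t2 := dist_triangle a O b
  linarith

lemma eq_of_mbtw_zero {x y : T} (h : dist x y ≤ 0) : x = y :=
  dist_le_zero.mp h

variable [RealTree T]

/-- Two points on a segment are comparable. -/
lemma mbtw_of_le {a b y z : T} (h1 : MBtw a y b) (h2 : MBtw a z b)
    (hle : dist a y ≤ dist a z) : MBtw a y z := by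
  have fp := RealTree.fourPoint y z a b
  rw [dist_comm y a, dist_comm z a] at fp
  unfold MBtw at *
  have hmax : max (dist a y + dist z b) (dist y b + dist a z) ≤
      dist a b - dist a y + dist a z := by
    apply max_le <;> linarith
  have t := dist_triangle a y z
  have := le_trans fp hmax
  linarith

lemma eq_of_mbtw_dist_eq {a b y z : T} (h1 : MBtw a y b) (h2 : MBtw a z b)
    (hd : dist a y = dist a z) : y = z := by
  have h3 := mbtw_of_le h1 h2 hd.le
  unfold MBtw at h3
  exact eq_of_mbtw_zero (by linarith)

/-- Convexity of segments. -/
lemma mbtw_convex {a b y z p : T} (hy : MBtw a y b) (hz : MBtw a z b) (hp : MBtw y p z) :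
    MBtw a p b := by
  rcases le_total (dist a y) (dist a z) with hle | hle
  · have hyz := mbtw_of_le hy hz hle
    unfold MBtw at *
    have t1 := dist_triangle a y p
    have t2 := dist_triangle p z b
    have t3 := dist_triangle a p b
    have t4 : dist a p + dist p b ≤ dist a y + dist y p + (dist p z + dist z b) := by
      calc dist a p + dist p b ≤ (dist a y + dist y p) + dist p b := by linarith
        _ ≤ (dist a y + dist y p) + (dist p z + dist z b) := by linarith
    linarith
  · have hyz := mbtw_of_le hz hy hle
    have hp' := mbtw_symm hp
    unfold MBtw at *
    have t1 := dist_triangle a z p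
    have t2 := dist_triangle p y b
    have t3 := dist_triangle a p b
    have t4 : dist a p + dist p b ≤ dist a z + dist z p + (dist p y + dist y b) := by
      calc dist a p + dist p b ≤ (dist a z + dist z p) + dist p b := by linarith
        _ ≤ (dist a z + dist z p) + (dist p y + dist y b) := by linarith
    linarith

/-- Existence of the median of three points. -/
lemma exists_median (u v w : T) : ∃ O : T, MBtw u O v ∧ MBtw u O w ∧ MBtw v O w ∧
    dist u O = (dist u v + dist u w - dist v w) / 2 := by
  have t1 := dist_triangle u v w
  have t2 := dist_triangle v u w
  have t3 := dist_triangle u w v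
  rw [dist_comm v u] at t2
  rw [dist_comm w v] at t3
  set r := (dist u v + dist u w - dist v w) / 2 with hr
  obtain ⟨O, hO, hOr⟩ := RealTree.exists_btw u v r ⟨by linarith, by linarith⟩
  have fp := RealTree.fourPoint O w u v
  rw [dist_comm O u] at fp
  have hOv : dist O v = dist u v - r := by unfold MBtw at hO; linarith
  have hOwle : dist O w ≤ dist u w - r := by
    have hmax : max (dist u O + dist w v) (dist O v + dist w u) ≤
        dist u v - r + dist u w := by
      apply max_le
      · rw [dist_comm w v]; rw [hOr]; linarith
      · rw [dist_comm w u, hOv]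
    have := le_trans fp hmax
    linarith
  have hOwge : dist u w ≤ dist u O + dist O w := dist_triangle u O w
  have hOw : dist O w = dist u w - r := by rw [hOr] at hOwge; linarith
  refine ⟨O, hO, ?_, ?_, hOr⟩
  · unfold MBtw; linarith
  · unfold MBtw; rw [dist_comm v O]; linarith

/-- Two legs of a betweenness relation meet only at the middle point. -/
lemma seg_inter_eq {u O v : T} (h : MBtw u O v) : seg O u ∩ seg O v = {O} := by
  ext p
  simp only [Set.mem_inter_iff, Set.mem_singleton_iff, mem_seg]
  constructor
  · rintro ⟨hpu, hpv⟩
    unfold MBtw at *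
    have t := dist_triangle u p v
    rw [dist_comm u p] at t
    rw [dist_comm u O] at h
    have hle : dist O p ≤ 0 := by linarith
    exact (eq_of_mbtw_zero hle).symm
  · rintro rfl
    exact ⟨mbtw_self_left _ _, mbtw_self_left _ _⟩

/-- Extending a separated leg. -/
lemma seg_inter_eq_of_mbtw {O u v w : T} (huw : MBtw O u w) (hu : u ≠ O)
    (hsep : seg O u ∩ seg O v = {O}) : seg O w ∩ seg O v = {O} := by
  ext p
  simp only [Set.mem_inter_iff, Set.mem_singleton_iff, mem_seg]
  constructor
  · rintro ⟨hpw, hpv⟩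
    by_contra hpO
    have hdp : 0 < dist O p := by
      rw [dist_pos]; exact fun h => hpO h.symm
    have hdu : 0 < dist O u := by rw [dist_pos]; exact fun h => hu h.symm
    set r := min (dist O p) (dist O u) with hrdef
    have hr0 : 0 < r := lt_min hdp hdu
    obtain ⟨p', hp', hp'r⟩ := RealTree.exists_btw O p r ⟨hr0.le, min_le_left _ _⟩
    have hp'w : MBtw O p' w := mbtw_trans hp' hpw
    have hp'u : MBtw O p' u := by
      apply mbtw_of_le hp'w huw
      rw [hp'r]; exact min_le_right _ _
    have hp'v : MBtw O p' v := mbtw_trans hp' hpv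
    have : p' ∈ seg O u ∩ seg O v := ⟨hp'u, hp'v⟩
    rw [hsep] at this
    rw [Set.mem_singleton_iff] at this
    rw [this] at hp'r
    simp at hp'r
    linarith
  · rintro rfl
    exact ⟨mbtw_self_left _ _, mbtw_self_left _ _⟩

end Geometry

section Act

variable {G T : Type*} [Group G] [MetricSpace T] [MulAction G T]

lemma mem_ptStab {g : G} {X : Set T} : g ∈ ptStab G X ↔ ∀ x ∈ X, g • x = x := Iff.rfl

lemma mbtw_smul (iso : ∀ g : G, Isometry fun y : T => g • y) (g : G) {x y z : T}
    (h : MBtw x y z) : MBtw (g • x) (g • y) (g • z) := by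
  unfold MBtw at *
  rw [(iso g).dist_eq, (iso g).dist_eq, (iso g).dist_eq]
  exact h

variable [RealTree T]

lemma assemble {a b O x e w : T} (hOab : MBtw a O b) (hxB : MBtw O x b) (hxO : x ≠ O)
    (heA : MBtw O e a) (heO : e ≠ O) (hwO : O ≠ w)
    (hsx : seg O x ∩ seg O w = {O}) (hse : seg O e ∩ seg O w = {O}) :
    IsTripod (seg O a ∪ seg O b ∪ seg O w) ∧ seg O a ∪ seg O b = seg a b := by
  have hOa : O ≠ a := by
    rintro rfl
    unfold MBtw at heA
    rw [dist_self] at heA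
    exact heO (eq_of_mbtw_zero (by linarith [dist_nonneg (x := O) (y := e)]))
  have hOb : O ≠ b := by
    rintro rfl
    unfold MBtw at hxB
    rw [dist_self] at hxB
    exact hxO (eq_of_mbtw_zero (by linarith [dist_nonneg (x := O) (y := x)]))
  refine ⟨⟨O, a, b, w, hOa, hOb, hwO, rfl, seg_inter_eq hOab, ?_, ?_⟩, ?_⟩
  · exact seg_inter_eq_of_mbtw heA heO hse
  · exact seg_inter_eq_of_mbtw hxB hxO hsx
  · ext p
    simp only [Set.mem_union, mem_seg]
    constructor
    · rintro (hp | hp)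
      · exact mbtw_trans (mbtw_symm hp) hOab
      · exact mbtw_symm (mbtw_trans (mbtw_symm hp) (mbtw_symm hOab))
    · intro hp
      rcases le_total (dist a p) (dist a O) with hle | hle
      · exact Or.inl (mbtw_symm (mbtw_of_le hp hOab hle))
      · exact Or.inr (mbtw_mid (mbtw_of_le hOab hp hle) hp)

lemma tripod_final (iso : ∀ g : G, Isometry fun y : T => g • y) {a b O x e : T} {h : G}
    (hOfix : h • O = O) (hOab : MBtw a O b) (hxB : MBtw O x b) (hxO : x ≠ O)
    (heA : MBtw O e a) (heO : e ≠ O) (hwO : O ≠ h • x)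
    (hsx : seg O x ∩ seg O (h • x) = {O}) (hse : seg O e ∩ seg O (h • x) = {O}) :
    ∃ X : Set T, IsTripod X ∧ ptStab G X ≤ ptStab G (seg a b) ∧
      ∀ m : G, m ∈ ptStab G (seg a b) → h⁻¹ * m * h ∈ ptStab G (seg a b) →
        m ∈ ptStab G X := by
  obtain ⟨htri, huni⟩ := assemble hOab hxB hxO heA heO hwO hsx hse
  refine ⟨seg O a ∪ seg O b ∪ seg O (h • x), htri, ?_, ?_⟩
  · intro g hg y hy
    rw [← huni] at hy
    exact hg y (Or.inl hy)
  · intro m hm hconj y hy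
    rcases hy with hy | hy
    · exact hm y (huni ▸ hy)
    · -- y ∈ seg O (h • x)
      have hinv : h⁻¹ • O = O := by
        conv_lhs => rw [← hOfix]
        exact inv_smul_smul h O
      set z := h⁻¹ • y with hz
      have hzx : MBtw O z x := by
        have := mbtw_smul iso h⁻¹ (mem_seg.mp hy)
        rwa [hinv, inv_smul_smul] at this
      have hzb : MBtw O z b := mbtw_trans hzx hxB
      have hzab : z ∈ seg a b := by rw [← huni]; exact Or.inr hzb
      have hyz : h • z = y := smul_inv_smul h y
      calc m • y = m • h • z := by rw [hyz]
        _ = (m * h) • z := by rw [mul_smul]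
        _ = (h * (h⁻¹ * m * h)) • z := by group
        _ = h • ((h⁻¹ * m * h) • z) := by rw [mul_smul]
        _ = h • z := by rw [hconj z hzab]
        _ = y := hyz

lemma tripod_main (iso : ∀ g : G, Isometry fun y : T => g • y) {a b c d x : T} {h : G}
    (hcd : c ≠ d) (hc : MBtw a c b) (hd : MBtw a d b) (hxI : MBtw a x b)
    (hfc : h • c = c) (hfd : h • d = d) (hmx : h • x ≠ x) :
    ∃ X : Set T, IsTripod X ∧ ptStab G X ≤ ptStab G (seg a b) ∧
      ∀ m : G, m ∈ ptStab G (seg a b) → h⁻¹ * m * h ∈ ptStab G (seg a b) →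
        m ∈ ptStab G X := by
  set w := h • x with hw
  have hdxw : 0 < dist x w := by rw [dist_pos]; exact fun hh => hmx hh.symm
  have hcw : dist c w = dist c x := by
    conv_lhs => rw [hw, ← hfc]
    exact (iso h).dist_eq c x
  have hdw : dist d w = dist d x := by
    conv_lhs => rw [hw, ← hfd]
    exact (iso h).dist_eq d x
  obtain ⟨O, hOc, hOw, hcOw, hOd2⟩ := exists_median x c w
  obtain ⟨O', hOd', hOw', hdOw', hOd2'⟩ := exists_median x d w
  have hdOx : dist x O = dist x w / 2 := by
    rw [hOd2, dist_comm x c, hcw]; ring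
  have hdOx' : dist x O' = dist x w / 2 := by
    rw [hOd2', dist_comm x d, hdw]; ring
  have hOO' : O = O' := eq_of_mbtw_dist_eq hOw hOw' (by rw [hdOx, hdOx'])
  subst hOO'
  have hOfix : h • O = O := by
    have h1 : MBtw c (h • O) w := by
      have := mbtw_smul iso h (mbtw_symm hOc)
      rwa [hfc, ← hw] at this
    have h2 : dist c (h • O) = dist c O := by
      conv_lhs => rw [← hfc]
      exact (iso h).dist_eq c O
    exact eq_of_mbtw_dist_eq h1 hcOw h2
  have hxO : x ≠ O := by
    have : 0 < dist x O := by rw [hdOx]; linarith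
    exact dist_pos.mp this
  have hOw2 : O ≠ w := by
    have : 0 < dist O w := by unfold MBtw at hOw; rw [hdOx] at hOw; linarith
    exact dist_pos.mp this
  have hOab : MBtw a O b := mbtw_convex hc hxI (mbtw_symm hOc)
  have hkey : ∃ e : T, e ≠ O ∧ MBtw a e b ∧ MBtw x O e ∧ MBtw e O w := by
    by_cases hOc' : O = c
    · exact ⟨d, fun hh => hcd (hOc'.symm.trans hh.symm), hd, hOd', hdOw'⟩
    · exact ⟨c, fun hh => hOc' hh.symm, hc, hOc, hcOw⟩
  obtain ⟨e, heO, heI, hxOe, heOw⟩ := hkey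
  have hsx : seg O x ∩ seg O w = {O} := seg_inter_eq hOw
  have hse : seg O e ∩ seg O w = {O} := seg_inter_eq heOw
  have hsex : seg O e ∩ seg O x = {O} := seg_inter_eq (mbtw_symm hxOe)
  have hside : ∀ p : T, MBtw a p b → MBtw O p a ∨ MBtw O p b := by
    intro p hp
    rcases le_total (dist a p) (dist a O) with hle | hle
    · exact Or.inl (mbtw_symm (mbtw_of_le hp hOab hle))
    · exact Or.inr (mbtw_mid (mbtw_of_le hOab hp hle) hp)
  have hopp : ∀ s p q : T, MBtw O p s → MBtw O q s → p ≠ O → q ≠ O →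
      seg O p ∩ seg O q = {O} → False := by
    intro s p q hps hqs hpO hqO hsep
    rcases le_total (dist O p) (dist O q) with hle | hle
    · have : p ∈ seg O p ∩ seg O q := ⟨mbtw_self_right _ _, mbtw_of_le hps hqs hle⟩
      rw [hsep] at this
      exact hpO this
    · have : q ∈ seg O p ∩ seg O q := ⟨mbtw_of_le hqs hps hle, mbtw_self_right _ _⟩
      rw [hsep] at this
      exact hqO this
  rcases hside x hxI with hxA | hxB
  · have heB : MBtw O e b := by
      rcases hside e heI with heA | heB
      · exact (hopp a x e hxA heA hxO heO
          (by rw [Set.inter_comm]; exact hsex)).elim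
      · exact heB
    obtain ⟨X, h1, h2, h3⟩ :=
      tripod_final iso hOfix (mbtw_symm hOab) hxA hxO heB heO hOw2 hsx hse
    rw [seg_comm b a] at h2 h3
    exact ⟨X, h1, h2, h3⟩
  · have heA : MBtw O e a := by
      rcases hside e heI with heA | heB
      · exact heA
      · exact (hopp b x e hxB heB hxO heO
          (by rw [Set.inter_comm]; exact hsex)).elim
    exact tripod_final iso hOfix hOab hxB hxO heA heO hOw2 hsx hse

end Act

section Grp

variable {G : Type*} [Group G]

open Subgroup

/-- Index of the normal core bound. -/
lemma normalCore_index_dvd (H : Subgroup G) [H.FiniteIndex] :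
    H.normalCore.index ∣ (H.index).factorial := by
  haveI : Fintype (G ⧸ H) := H.fintypeQuotientOfFiniteIndex
  haveI : DecidableEq (G ⧸ H) := Classical.decEq _
  rw [Subgroup.normalCore_eq_ker, Subgroup.index_ker]
  have h1 : Nat.card (MulAction.toPermHom G (G ⧸ H)).range ∣
      Nat.card (Equiv.Perm (G ⧸ H)) := Subgroup.card_subgroup_dvd_card _
  have h2 : Nat.card (Equiv.Perm (G ⧸ H)) = (H.index).factorial := by
    rw [Nat.card_eq_fintype_card, Fintype.card_perm, Subgroup.index_eq_card,
      Nat.card_eq_fintype_card]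
  rwa [h2] at h1

/-- The key group-theoretic step. -/
lemma group_part {A B : Subgroup G} (hAB : A < B) (k : ℕ) (N : Subgroup ↥B)
    (hnil : Group.IsNilpotent ↥N) (hNi : N.index ≠ 0) (hNk : N.index ≤ k) :
    ∃ (M : Subgroup G) (h : G), M ≤ A ∧ M.relIndex A ≠ 0 ∧
      M.relIndex A ≤ k.factorial ∧ h ∈ B ∧ h ∉ A ∧ ∀ m ∈ M, h⁻¹ * m * h ∈ M := by
  classical
  set NG := N.map B.subtype with hNG
  have hNGB : NG ≤ B := by
    rintro _ ⟨n, _, rfl⟩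
    exact (n : ↥B).2
  have hNGsub : NG.subgroupOf B = N := by
    rw [hNG, Subgroup.subgroupOf, Subgroup.comap_map_eq_self_of_injective B.subtype_injective]
  have hNGrel : NG.relIndex B = N.index := by
    rw [Subgroup.relIndex, hNGsub]
  by_cases hNA : NG ≤ A
  · -- normal core case
    have hArel_dvd : A.relIndex B ∣ N.index := by
      rw [← hNGrel]; exact Subgroup.relIndex_dvd_of_le_left B hNA
    have hArel_ne : A.relIndex B ≠ 0 := fun hz =>
      hNi (Nat.eq_zero_of_zero_dvd (hz ▸ hArel_dvd))
    have hArel_le : A.relIndex B ≤ k := le_trans (Nat.le_of_dvd (Nat.pos_of_ne_zero hNi)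
      hArel_dvd) hNk
    set A' := A.subgroupOf B with hA'
    haveI : A'.FiniteIndex := ⟨hArel_ne⟩
    set C := A'.normalCore with hC
    haveI : C.FiniteIndex := Subgroup.finiteIndex_normalCore A'
    have hCdvd : C.index ∣ (A'.index).factorial := normalCore_index_dvd A'
    have hCne : C.index ≠ 0 := FiniteIndex.index_ne_zero
    set M := C.map B.subtype with hM
    have hMA : M ≤ A := by
      have h1 : M ≤ A'.map B.subtype := Subgroup.map_mono (Subgroup.normalCore_le A')
      rwa [Subgroup.subgroupOf_map_subtype, inf_eq_left.mpr hAB.le] at h1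
    have hMsub : M.subgroupOf B = C := by
      rw [hM, Subgroup.subgroupOf, Subgroup.comap_map_eq_self_of_injective B.subtype_injective]
    have hMrelB : M.relIndex B = C.index := by rw [Subgroup.relIndex, hMsub]
    have hmul : M.relIndex A * A.relIndex B = C.index := by
      rw [← hMrelB]; exact Subgroup.relIndex_mul_relIndex M A B hMA hAB.le
    have hMne : M.relIndex A ≠ 0 := by
      intro hz
      rw [hz, zero_mul] at hmul
      exact hCne hmul.symm
    have hMle : M.relIndex A ≤ k.factorial := by
      have h1 : M.relIndex A ∣ C.index := Dvd.intro _ hmul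
      have h2 : M.relIndex A ∣ (A'.index).factorial := h1.trans hCdvd
      have h3 : A'.index ≤ k := hArel_le
      calc M.relIndex A ≤ (A'.index).factorial :=
            Nat.le_of_dvd (Nat.factorial_pos _) h2
        _ ≤ k.factorial := Nat.factorial_le h3
    obtain ⟨h, hhB, hhA⟩ := SetLike.exists_of_lt hAB
    refine ⟨M, h, hMA, hMne, hMle, hhB, hhA, ?_⟩
    rintro _ ⟨m, hm, rfl⟩
    have hconj : (⟨h, hhB⟩ : ↥B)⁻¹ * m * (⟨h, hhB⟩ : ↥B)⁻¹⁻¹ ∈ C :=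
      Subgroup.Normal.conj_mem (Subgroup.normalCore_normal A') m hm _
    rw [inv_inv] at hconj
    exact ⟨_, hconj, rfl⟩
  · -- nilpotent case
    haveI : Group.IsNilpotent ↥NG :=
      nilpotent_of_mulEquiv (Subgroup.equivMapOfInjective N B.subtype B.subtype_injective)
    set M := NG ⊓ A with hMdef
    have hMA : M ≤ A := inf_le_right
    have hMrel : M.relIndex A = NG.relIndex A := by
      rw [hMdef, Subgroup.inf_relIndex_right]
    have hMne : M.relIndex A ≠ 0 := by
      rw [hMrel]
      intro hz
      exact hNi (hNGrel ▸ Subgroup.relIndex_eq_zero_of_le_right hAB.le hz)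
    have hMle : M.relIndex A ≤ k.factorial := by
      rw [hMrel]
      have h1 : NG.relIndex A ≤ NG.relIndex B :=
        Subgroup.relIndex_le_of_le_right hAB.le (by rw [hNGrel]; exact hNi)
      calc NG.relIndex A ≤ N.index := by rw [← hNGrel]; exact h1
        _ ≤ k := hNk
        _ ≤ k.factorial := Nat.self_le_factorial k
    -- find the normalizing element
    set K := M.subgroupOf NG with hK
    have hKtop : K < ⊤ := by
      rcases SetLike.not_le_iff_exists.mp hNA with ⟨n, hnNG, hnA⟩
      refine lt_top_iff_ne_top.mpr fun htop => hnA ?_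
      have : (⟨n, hnNG⟩ : ↥NG) ∈ K := htop ▸ Subgroup.mem_top _
      exact (Subgroup.mem_subgroupOf.mp this).2
    obtain ⟨h', hh'norm, hh'K⟩ :=
      SetLike.exists_of_lt (normalizerCondition_of_isNilpotent K hKtop)
    refine ⟨M, (h' : G), hMA, hMne, hMle, hNGB h'.2, ?_, ?_⟩
    · intro hA
      exact hh'K (Subgroup.mem_subgroupOf.mpr ⟨h'.2, hA⟩)
    · intro m hm
      have hmK : (⟨m, hm.1⟩ : ↥NG) ∈ K := Subgroup.mem_subgroupOf.mpr hm
      have hnorm := Subgroup.mem_normalizer_iff.mp hh'norm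
      have h2 : h'⁻¹ * (⟨m, hm.1⟩ : ↥NG) * h' ∈ K := by
        apply (hnorm (h'⁻¹ * (⟨m, hm.1⟩ : ↥NG) * h')).mpr
        have heq : h' * (h'⁻¹ * (⟨m, hm.1⟩ : ↥NG) * h') * h'⁻¹ =
            (⟨m, hm.1⟩ : ↥NG) := by group
        rw [heq]
        exact hmK
      have h3 := Subgroup.mem_subgroupOf.mp h2
      simpa using h3

end Grp

section FG

variable {G : Type*} [Group G]

open Subgroup

/-- A group with a finitely generated subgroup of finite index is finitely generated. -/
lemma groupFG_of_fg_of_finiteIndex (H : Subgroup G) (hfg : Group.FG ↥H)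
    (hi : H.index ≠ 0) : Group.FG G := by
  classical
  haveI : H.FiniteIndex := ⟨hi⟩
  obtain ⟨S, hS, hSfin⟩ := Group.fg_iff.mp hfg
  have hSG : Subgroup.closure ((H.subtype) '' S) = H := by
    rw [← MonoidHom.map_closure, hS, ← MonoidHom.range_eq_map, Subgroup.range_subtype]
  set R : Set G := Set.range (fun q : G ⧸ H => q.out) with hR
  have hRfin : R.Finite := Set.finite_range _
  refine Group.fg_iff.mpr ⟨(H.subtype '' S) ∪ R, ?_, (hSfin.image _).union hRfin⟩
  rw [eq_top_iff]
  intro g _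
  set r : G := (QuotientGroup.mk g : G ⧸ H).out with hr
  have hrR : r ∈ R := ⟨_, rfl⟩
  have hmk : (QuotientGroup.mk r : G ⧸ H) = QuotientGroup.mk g := by
    rw [hr]
    exact QuotientGroup.out_eq' _
  have hH : r⁻¹ * g ∈ H := (QuotientGroup.eq).mp hmk
  have h1 : r ∈ Subgroup.closure ((H.subtype '' S) ∪ R) :=
    Subgroup.subset_closure (Or.inr hrR)
  have h2 : r⁻¹ * g ∈ Subgroup.closure ((H.subtype '' S) ∪ R) := by
    have hle : H ≤ Subgroup.closure ((H.subtype '' S) ∪ R) := by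
      conv_lhs => rw [← hSG]
      exact Subgroup.closure_mono Set.subset_union_left
    exact hle hH
  have : g = r * (r⁻¹ * g) := by group
  rw [this]
  exact Subgroup.mul_mem _ h1 h2

lemma subgroupFG_of_fg_of_relindex {P A : Subgroup G} (hPA : P ≤ A) (hfg : P.FG)
    (hi : P.relIndex A ≠ 0) : A.FG := by
  rw [← Group.fg_iff_subgroup_fg] at hfg ⊢
  have hfg' : Group.FG ↥(P.subgroupOf A) := by
    haveI := hfg
    exact Group.fg_of_surjective (f := ((Subgroup.subgroupOfEquivOfLe hPA).symm.toMonoidHom))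
      (Subgroup.subgroupOfEquivOfLe hPA).symm.surjective
  exact groupFG_of_fg_of_finiteIndex (P.subgroupOf A) hfg' hi

end FG

/-- if arc stabilizers have nilpotent subgroups of index ≤ k and tripod
stabilizers are finitely generated, then the stabilizer of every unstable arc contains a
subgroup of index ≤ k! fixing a tripod pointwise; in particular it is finitely generated. -/
theorem stmt_17 {G T : Type*} [Group G] [MetricSpace T] [RealTree T] [MulAction G T]
    (iso : ∀ g : G, Isometry fun x : T => g • x) (k : ℕ)
    (hnilp : ∀ I : Set T, IsArc I → ∃ N : Subgroup (↥(ptStab G I)),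
      Group.IsNilpotent (↥N) ∧ N.index ≠ 0 ∧ N.index ≤ k)
    (htrip : ∀ X : Set T, IsTripod X → (ptStab G X).FG) :
    ∀ I : Set T, IsArc I →
      (∃ J, IsArc J ∧ J ⊆ I ∧ ptStab G I < ptStab G J) →
      (∃ B : Subgroup G, B ≤ ptStab G I ∧
        B.relIndex (ptStab G I) ≠ 0 ∧ B.relIndex (ptStab G I) ≤ k.factorial ∧
        ∃ X : Set T, IsTripod X ∧ B ≤ ptStab G X) ∧
      (ptStab G I).FG := by
  intro I hI hunst
  obtain ⟨J, hJarc, hJI, hlt⟩ := hunst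
  obtain ⟨a, b, hab, hIab⟩ := hI
  obtain ⟨c, d, hcd, hJcd⟩ := hJarc
  obtain ⟨N, hnil, hNi, hNk⟩ := hnilp J ⟨c, d, hcd, hJcd⟩
  obtain ⟨M, h, hMA, hMrne, hMrle, hhB, hhA, hconj⟩ := group_part hlt k N hnil hNi hNk
  have hxex : ∃ x ∈ I, h • x ≠ x := by
    by_contra hcon
    push_neg at hcon
    exact hhA (fun y hy => hcon y hy)
  obtain ⟨x, hxI, hmx⟩ := hxex
  have hcJ : c ∈ J := by rw [hJcd]; exact mbtw_self_left c d
  have hdJ : d ∈ J := by rw [hJcd]; exact mbtw_self_right c d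
  have hcI : c ∈ I := hJI hcJ
  have hdI : d ∈ I := hJI hdJ
  rw [hIab] at hcI hdI hxI
  have hfc : h • c = c := hhB c hcJ
  have hfd : h • d = d := hhB d hdJ
  obtain ⟨X, hXtri, hXle, hXfix⟩ := tripod_main iso hcd hcI hdI hxI hfc hfd hmx
  rw [← hIab] at hXle hXfix
  have hMP : M ≤ ptStab G X := fun m hm => hXfix m (hMA hm) (hMA (hconj m hm))
  constructor
  · exact ⟨M, hMA, hMrne, hMrle, X, hXtri, hMP⟩
  · have hPrel : (ptStab G X).relIndex (ptStab G I) ≠ 0 := by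
      intro hz
      exact hMrne (Subgroup.relIndex_eq_zero_of_le_left hMP hz)
    exact subgroupFG_of_fg_of_relindex hXle (htrip X hXtri) hPrel
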